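/- Under the stated bilevel setting with constraints, assumptions (A1)–(A3), and the stated approximation scheme with μ_k → 0 and θ_k → 0: for every x̄ ∈ X and every sequence (x_k) in ℝ^m converging to x̄, lim sup_{k→∞} f_k*(x_k) ≤ f*(x̄). -/
import Mathlib


open Filter Topology

noncomputable section

/-- `ℝ^m` as a Euclidean space. -/
abbrev Evec (m : ℕ) := EuclideanSpace ℝ (Fin m)

/-- The lower-level value function `f*(x) = inf { f(x,y) : h(x,y) ≤ 0 }`,
taken in the extended reals (so `inf ∅ = +∞`). -/
def lowerValue {m n : ℕ} (f h : Evec m → Evec n → ℝ) (x : Evec m) : EReal :=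
  ⨅ y ∈ {y : Evec n | h x y ≤ 0}, ((f x y : ℝ) : EReal)

/-- The lower-level solution set `S(x) = argmin { f(x,y) : h(x,y) ≤ 0 }`. -/
def lowerArgmin {m n : ℕ} (f h : Evec m → Evec n → ℝ) (x : Evec m) : Set (Evec n) :=
  {y | h x y ≤ 0 ∧ ∀ y', h x y' ≤ 0 → f x y ≤ f x y'}

/-- The upper-level value function
`φ(x) = inf { F(x,y) : H(x,y) ≤ 0, h(x,y) ≤ 0, f(x,y) ≤ f*(x) }`,
taken in the extended reals (so `inf ∅ = +∞`). -/
def upperValue {m n : ℕ} (F f H h : Evec m → Evec n → ℝ) (x : Evec m) : EReal :=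
  ⨅ y ∈ {y : Evec n |
      H x y ≤ 0 ∧ h x y ≤ 0 ∧ ((f x y : ℝ) : EReal) ≤ lowerValue f h x},
    ((F x y : ℝ) : EReal)

/-- Canonical monotone extension of a nondecreasing function `P : ℝ → [0,+∞]`
to extended-real arguments (agrees with `P` on `ℝ` when `P` is nondecreasing and
continuous). -/
def erealExt (P : ℝ → EReal) : EReal → EReal := fun e =>
  haveI := Classical.dec (e = ⊥)
  if e = ⊥ then ⨅ r : ℝ, P r else sSup (P '' {r : ℝ | (r : EReal) ≤ e})

/-- The regularized barrier value function
`f_k*(x) = inf_y ( f(x,y) + P_{B,k}(h(x,y)) + (μ_k/2)‖y‖² )`. -/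
def fkstar {m n : ℕ} (f h : Evec m → Evec n → ℝ) (PB : ℕ → ℝ → EReal)
    (μ : ℕ → ℝ) (k : ℕ) (x : Evec m) : EReal :=
  ⨅ y : Evec n, (((f x y + μ k / 2 * ‖y‖ ^ 2 : ℝ) : EReal) + PB k (h x y))

/-- The approximate upper-level value function
`φ_k(x) = inf_y ( F(x,y) + P_{H,k}(H(x,y)) + P_{h,k}(h(x,y))
  + P_{f,k}( f(x,y) − f_k*(x) ) + (θ_k/2)‖y‖² )`. -/
def phik {m n : ℕ} (F f H h : Evec m → Evec n → ℝ)
    (PB PH Ph Pf : ℕ → ℝ → EReal) (μ θ : ℕ → ℝ) (k : ℕ) (x : Evec m) : EReal :=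
  ⨅ y : Evec n,
    (((F x y + θ k / 2 * ‖y‖ ^ 2 : ℝ) : EReal) + PH k (H x y) + Ph k (h x y)
      + erealExt (Pf k) (((f x y : ℝ) : EReal) - fkstar f h PB μ k x))

/-- The indicator function `δ_X` of a set `X`. -/
def deltaInd {m : ℕ} (X : Set (Evec m)) (x : Evec m) : EReal :=
  haveI := Classical.dec (x ∈ X)
  if x ∈ X then 0 else ⊤

/-- A family of auxiliary (penalty or modified barrier) functions `ℝ → [0,+∞]`:
each is nonnegative, nondecreasing and continuous; `P_k(ω) → 0` for every `ω ≤ 0`;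
and whenever `limsup_k P_k(ω_k) < +∞` for a real sequence `(ω_k)` one has
`limsup_k ω_k ≤ 0`. -/
def AuxFamily (P : ℕ → ℝ → EReal) : Prop :=
  (∀ k ω, 0 ≤ P k ω) ∧ (∀ k, Monotone (P k)) ∧ (∀ k, Continuous (P k)) ∧
    (∀ ω : ℝ, ω ≤ 0 → Tendsto (fun k => P k ω) atTop (𝓝 0)) ∧
    (∀ ω : ℕ → ℝ, limsup (fun k => P k (ω k)) atTop < ⊤ →
      limsup (fun k => ((ω k : ℝ) : EReal)) atTop ≤ 0)

/-- A family of barrier functions `ℝ → [0,+∞]`: each is nonnegative and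
nondecreasing, equal to `+∞` on `[0,∞)`, with `P_{B,k}(ω) → 0` for every `ω < 0`. -/
def BarrierFamily (PB : ℕ → ℝ → EReal) : Prop :=
  (∀ k ω, 0 ≤ PB k ω) ∧ (∀ k, Monotone (PB k)) ∧
    (∀ k, ∀ ω : ℝ, 0 ≤ ω → PB k ω = ⊤) ∧
    (∀ ω : ℝ, ω < 0 → Tendsto (fun k => PB k ω) atTop (𝓝 0))

/-- `g` is level-bounded in `y` locally uniformly in `x ∈ X`. -/
def LevelBoundedUnif {m n : ℕ} (g : Evec m → Evec n → ℝ) (X : Set (Evec m)) : Prop :=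
  ∀ x₀ ∈ X, ∀ c : ℝ, ∃ δ > (0 : ℝ), ∃ B : Set (Evec n), Bornology.IsBounded B ∧
    ∀ x ∈ X, ‖x - x₀‖ ≤ δ → {y | g x y ≤ c} ⊆ B

end

theorem BVFSM_limsup_fkstar_le
    {m n : ℕ} (F f H h : Evec m → Evec n → ℝ) (X : Set (Evec m))
    (PB PH Ph Pf : ℕ → ℝ → EReal) (μ θ : ℕ → ℝ)
    (hX : IsCompact X)
    (hFc : Continuous fun p : Evec m × Evec n => F p.1 p.2)
    (hfc : Continuous fun p : Evec m × Evec n => f p.1 p.2)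
    (hHc : Continuous fun p : Evec m × Evec n => H p.1 p.2)
    (hhc : Continuous fun p : Evec m × Evec n => h p.1 p.2)
    (hfbd : ∃ cf : ℝ, ∀ x y, cf ≤ f x y)
    (hA1 : ∀ x ∈ X, (lowerArgmin f h x).Nonempty)
    (hA2 : LevelBoundedUnif F X)
    (hA3 : ∀ x y, h x y = 0 → ∀ ε > (0 : ℝ), ∃ y', ‖y' - y‖ < ε ∧ h x y' < 0)
    (hμpos : ∀ k, 0 < μ k) (hθpos : ∀ k, 0 < θ k)
    (hμ0 : Tendsto μ atTop (𝓝 0)) (hθ0 : Tendsto θ atTop (𝓝 0))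
    (hPB : BarrierFamily PB) (hPH : AuxFamily PH)
    (hPh : AuxFamily Ph) (hPf : AuxFamily Pf)
    :
    ∀ xb ∈ X, ∀ xs : ℕ → Evec m, Tendsto xs atTop (𝓝 xb) →
      limsup (fun k => fkstar f h PB μ k (xs k)) atTop ≤ lowerValue f h xb := by
  intro xb hxb xs hxs
  -- key lemma: if h xb y' < 0 then limsup fkstar ≤ f xb y'
  have key : ∀ y' : Evec n, h xb y' < 0 →
      limsup (fun k => fkstar f h PB μ k (xs k)) atTop ≤ ((f xb y' : ℝ) : EReal) := by
    intro y' hy'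
    set c : ℝ := h xb y' / 2 with hc_def
    have hclt : c < 0 := by simp only [hc_def]; linarith
    have hxy : Tendsto (fun k => (xs k, y')) atTop (𝓝 (xb, y')) :=
      hxs.prodMk_nhds tendsto_const_nhds
    have hhlim : Tendsto (fun k => h (xs k) y') atTop (𝓝 (h xb y')) :=
      (hhc.tendsto (xb, y')).comp hxy
    have hev : ∀ᶠ k in atTop, h (xs k) y' ≤ c :=
      hhlim.eventually_le_const (by simp only [hc_def]; linarith)
    have hb : ∀ᶠ k in atTop, fkstar f h PB μ k (xs k)
        ≤ ((f (xs k) y' + μ k / 2 * ‖y'‖ ^ 2 : ℝ) : EReal) + PB k c := by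
      filter_upwards [hev] with k hk
      calc fkstar f h PB μ k (xs k)
          ≤ ((f (xs k) y' + μ k / 2 * ‖y'‖ ^ 2 : ℝ) : EReal) + PB k (h (xs k) y') :=
            iInf_le _ y'
        _ ≤ _ := add_le_add le_rfl (hPB.2.1 k hk)
    have hflim : Tendsto (fun k => ((f (xs k) y' + μ k / 2 * ‖y'‖ ^ 2 : ℝ) : EReal))
        atTop (𝓝 ((f xb y' : ℝ) : EReal)) := by
      have h1 : Tendsto (fun k => f (xs k) y' + μ k / 2 * ‖y'‖ ^ 2) atTop
          (𝓝 (f xb y' + 0 / 2 * ‖y'‖ ^ 2)) := by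
        exact (((hfc.tendsto (xb, y')).comp hxy).add
          ((hμ0.div_const 2).mul_const _))
      rw [show f xb y' + 0 / 2 * ‖y'‖ ^ 2 = f xb y' by ring] at h1
      exact (continuous_coe_real_ereal.tendsto _).comp h1
    have hPBlim : Tendsto (fun k => PB k c) atTop (𝓝 0) := hPB.2.2.2 c hclt
    have htend : Tendsto (fun k => ((f (xs k) y' + μ k / 2 * ‖y'‖ ^ 2 : ℝ) : EReal) + PB k c)
        atTop (𝓝 (((f xb y' : ℝ) : EReal) + 0)) := by
      have hca : ContinuousAt (fun p : EReal × EReal => p.1 + p.2)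
          (((f xb y' : ℝ) : EReal), (0 : EReal)) :=
        EReal.continuousAt_add (by simp) (by simp)
      exact hca.tendsto.comp (hflim.prodMk_nhds hPBlim)
    rw [add_zero] at htend
    calc limsup (fun k => fkstar f h PB μ k (xs k)) atTop
        ≤ limsup (fun k => ((f (xs k) y' + μ k / 2 * ‖y'‖ ^ 2 : ℝ) : EReal) + PB k c) atTop :=
          limsup_le_limsup hb
      _ = ((f xb y' : ℝ) : EReal) := htend.limsup_eq
  -- main: take infimum over feasible y
  rw [lowerValue]
  refine le_iInf₂ fun y hy => ?_
  -- suffices: limsup ≤ f xb y + ε for all ε > 0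
  refine EReal.le_of_forall_lt_iff_le.mp fun z hz => ?_
  have hz' : f xb y < z := by exact_mod_cast hz
  set ε : ℝ := z - f xb y with hε_def
  have hεpos : 0 < ε := by simp only [hε_def]; linarith
  -- continuity of f xb at y
  have hcont : ContinuousAt (fun y' => f xb y') y :=
    (hfc.comp (Continuous.prodMk_right xb)).continuousAt
  obtain ⟨δ, hδpos, hδ⟩ := Metric.continuousAt_iff.mp hcont ε hεpos
  have hy0 : h xb y ≤ 0 := hy
  rcases lt_or_eq_of_le hy0 with hlt | heq
  · exact (key y hlt).trans (by exact_mod_cast hz'.le)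
  · obtain ⟨y', hy'near, hy'neg⟩ := hA3 xb y heq δ hδpos
    have hdist : dist y' y < δ := by rwa [dist_eq_norm]
    have := hδ hdist
    have hfy' : f xb y' ≤ z := by
      have : |f xb y' - f xb y| < ε := by
        simpa [Real.dist_eq] using this
      have := abs_lt.mp this
      simp only [hε_def] at this
      linarith [this.2]
    exact (key y' hy'neg).trans (by exact_mod_cast hfy')
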